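/- arXiv:1308.4732 — 2 statements merged into one kernel-verified Lean document; each statement's English description precedes it below -/
import Mathlib

section
/- Double-max duality (primal to dual direction): If ζ̄ ∈ 𝓢ₐ⁻ is a critical point of Π^d and x̄ = Gₐ(ζ̄)⁻¹f is a local maximizer of Π on ℝⁿ, then ζ̄ is a local maximizer of Π^d on 𝓢ₐ⁻, and Π(x̄) = Π^d(ζ̄). -/
open Matrix

lemma gibbs_aux {p : ℕ} (β : ℝ) (hβ : 0 < β) (τ u : Fin p → ℝ)
    (hτ : ∀ i, 0 < τ i) (hs : ∑ i, τ i < 1) :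
    ∑ i, τ i * u i - (1/β) * ((∑ i, τ i * Real.log (τ i))
      + (1 - ∑ i, τ i) * Real.log (1 - ∑ i, τ i))
    ≤ (1/β) * Real.log (1 + ∑ i, Real.exp (β * u i)) := by
  set S := 1 + ∑ i, Real.exp (β * u i) with hSdef
  have hS : 0 < S := by positivity
  set τ₀ := 1 - ∑ i, τ i with ht0
  have ht0pos : 0 < τ₀ := by simp [ht0]; linarith
  clear_value S τ₀
  have key : ∀ i, τ i * (β * u i) - τ i * Real.log (τ i) - τ i * Real.log S
      ≤ Real.exp (β * u i) / S - τ i := by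
    intro i
    have hτi := hτ i
    have h1 : 0 < Real.exp (β * u i) / (τ i * S) :=
      div_pos (Real.exp_pos _) (mul_pos hτi hS)
    have h2 := Real.log_le_sub_one_of_pos h1
    have h3 : Real.log (Real.exp (β * u i) / (τ i * S))
        = β * u i - (Real.log (τ i) + Real.log S) := by
      rw [Real.log_div (Real.exp_pos _).ne' (mul_pos hτi hS).ne', Real.log_exp,
        Real.log_mul hτi.ne' hS.ne']
    rw [h3] at h2
    have h4 := mul_le_mul_of_nonneg_left h2 hτi.le
    have h5 : τ i * (Real.exp (β * u i) / (τ i * S) - 1)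
        = Real.exp (β * u i) / S - τ i := by
      field_simp
    rw [h5] at h4
    nlinarith [h4]
  have key0 : (0:ℝ) - τ₀ * Real.log τ₀ - τ₀ * Real.log S ≤ 1 / S - τ₀ := by
    have h1 : 0 < 1 / (τ₀ * S) := one_div_pos.mpr (mul_pos ht0pos hS)
    have h2 := Real.log_le_sub_one_of_pos h1
    have h3 : Real.log (1 / (τ₀ * S)) = -(Real.log τ₀ + Real.log S) := by
      rw [Real.log_div one_ne_zero (mul_pos ht0pos hS).ne', Real.log_one,
        Real.log_mul ht0pos.ne' hS.ne']
      ring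
    rw [h3] at h2
    have h4 := mul_le_mul_of_nonneg_left h2 ht0pos.le
    have h5 : τ₀ * (1 / (τ₀ * S) - 1) = 1 / S - τ₀ := by
      field_simp
    rw [h5] at h4
    nlinarith [h4]
  have hsumkey := Finset.sum_le_sum (fun i (_ : i ∈ Finset.univ) => key i)
  have e1 : ∑ i, (τ i * (β * u i) - τ i * Real.log (τ i) - τ i * Real.log S)
      = β * (∑ i, τ i * u i) - (∑ i, τ i * Real.log (τ i)) - (∑ i, τ i) * Real.log S := by
    rw [Finset.sum_sub_distrib, Finset.sum_sub_distrib, Finset.mul_sum, Finset.sum_mul]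
    congr 2
    apply Finset.sum_congr rfl; intro i _; ring
  have e2 : ∑ i, (Real.exp (β * u i) / S - τ i)
      = (∑ i, Real.exp (β * u i)) / S - ∑ i, τ i := by
    rw [Finset.sum_sub_distrib, Finset.sum_div]
  rw [e1, e2] at hsumkey
  have hmain : β * (∑ i, τ i * u i) - (∑ i, τ i * Real.log (τ i)) - τ₀ * Real.log τ₀
      ≤ Real.log S := by
    have hSS : (∑ i, Real.exp (β * u i)) / S + 1 / S = 1 := by
      field_simp [hSdef]
      linarith [hSdef]
    have hlog : (∑ i, τ i) * Real.log S + τ₀ * Real.log S = Real.log S := by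
      rw [ht0]; ring
    linarith [hsumkey, key0, hlog, hSS, ht0]
  have hb : 0 ≤ 1/β := by positivity
  have hmul := mul_le_mul_of_nonneg_left hmain hb
  have hexp : 1/β * (β * (∑ i, τ i * u i) - (∑ i, τ i * Real.log (τ i)) - τ₀ * Real.log τ₀)
      = (∑ i, τ i * u i) - 1/β * ((∑ i, τ i * Real.log (τ i)) + τ₀ * Real.log τ₀) := by
    field_simp
    ring
  rw [hexp] at hmul
  linarith [hmul]

lemma sum_mulVec' {n k : ℕ} (M : Fin k → Matrix (Fin n) (Fin n) ℝ) (x : Fin n → ℝ) :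
    (∑ i, M i) *ᵥ x = ∑ i, M i *ᵥ x := by
  ext j
  simp only [Matrix.mulVec, dotProduct, Finset.sum_apply]
  rw [Finset.sum_comm]
  congr 1; ext y; rw [Matrix.sum_apply, Finset.sum_mul]

lemma dot_sum' {n k : ℕ} (x : Fin n → ℝ) (v : Fin k → Fin n → ℝ) :
    x ⬝ᵥ (∑ i, v i) = ∑ i, x ⬝ᵥ v i := by
  simp only [dotProduct, Finset.sum_apply, Finset.mul_sum]
  rw [Finset.sum_comm]

noncomputable def XiFun {n p r : ℕ} (A : Matrix (Fin n) (Fin n) ℝ)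
    (Q : Fin p → Matrix (Fin n) (Fin n) ℝ) (B : Fin r → Matrix (Fin n) (Fin n) ℝ)
    (f : Fin n → ℝ) (d : Fin p → ℝ) (c : Fin r → ℝ) (β : ℝ) (α : Fin r → ℝ)
    (τ : Fin p → ℝ) (σ : Fin r → ℝ) (x : Fin n → ℝ) : ℝ :=
  (1/2) * (x ⬝ᵥ A.mulVec x) - f ⬝ᵥ x
  + ∑ i, τ i * ((1/2) * (x ⬝ᵥ (Q i).mulVec x) + d i)
  + ∑ i, σ i * ((1/2) * (x ⬝ᵥ (B i).mulVec x) + c i)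
  - (1/β) * ((∑ i, τ i * Real.log (τ i)) + (1 - ∑ i, τ i) * Real.log (1 - ∑ i, τ i))
  - ∑ i, (σ i)^2 / (2 * α i)

lemma XiFun_le_prim {n p r : ℕ} (A : Matrix (Fin n) (Fin n) ℝ)
    (Q : Fin p → Matrix (Fin n) (Fin n) ℝ) (B : Fin r → Matrix (Fin n) (Fin n) ℝ)
    (f : Fin n → ℝ) (d : Fin p → ℝ) (c : Fin r → ℝ) (β : ℝ) (hβ : 0 < β)
    (α : Fin r → ℝ) (hα : ∀ i, 0 < α i)
    (τ : Fin p → ℝ) (σ : Fin r → ℝ) (x : Fin n → ℝ)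
    (hτ : ∀ i, 0 < τ i) (hs : ∑ i, τ i < 1) :
    XiFun A Q B f d c β α τ σ x ≤ (1/2) * (x ⬝ᵥ A.mulVec x) - f ⬝ᵥ x
      + (1/β) * Real.log (1 + ∑ i, Real.exp (β * ((1/2) * (x ⬝ᵥ (Q i).mulVec x) + d i)))
      + ∑ i, (α i / 2) * ((1/2) * (x ⬝ᵥ (B i).mulVec x) + c i)^2 := by
  unfold XiFun
  have h1 := gibbs_aux β hβ τ (fun i => (1/2) * (x ⬝ᵥ (Q i).mulVec x) + d i) hτ hs
  have h2 : ∑ i, σ i * ((1/2) * (x ⬝ᵥ (B i).mulVec x) + c i) - ∑ i, (σ i)^2/(2*α i)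
      ≤ ∑ i, (α i / 2) * ((1/2) * (x ⬝ᵥ (B i).mulVec x) + c i)^2 := by
    rw [← Finset.sum_sub_distrib]
    apply Finset.sum_le_sum
    intro i _
    have hαi := hα i
    set v := (1/2) * (x ⬝ᵥ (B i).mulVec x) + c i
    have e : (α i / 2) * v^2 - (σ i * v - (σ i)^2/(2*α i))
        = (α i * v - σ i)^2 / (2 * α i) := by
      field_simp
      ring
    have hnn : 0 ≤ (α i * v - σ i)^2 / (2 * α i) :=
      div_nonneg (sq_nonneg _) (by linarith)
    linarith [e, hnn]
  linarith [h1, h2]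

theorem double_max_duality_primal_to_dual
    {n p r : ℕ} (hn : 0 < n) (hp : 0 < p) (hr : 0 < r)
    (A : Matrix (Fin n) (Fin n) ℝ) (hA : A.IsSymm)
    (Q : Fin p → Matrix (Fin n) (Fin n) ℝ) (hQ : ∀ i, (Q i).IsSymm)
    (B : Fin r → Matrix (Fin n) (Fin n) ℝ) (hB : ∀ i, (B i).IsSymm)
    (f : Fin n → ℝ) (d : Fin p → ℝ) (c : Fin r → ℝ)
    (β : ℝ) (hβ : 0 < β) (α : Fin r → ℝ) (hα : ∀ i, 0 < α i)
    (Prim : (Fin n → ℝ) → ℝ)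
    (hPrim : Prim = fun x => (1/2) * (x ⬝ᵥ A.mulVec x) - f ⬝ᵥ x
        + (1/β) * Real.log (1 + ∑ i, Real.exp (β * ((1/2) * (x ⬝ᵥ (Q i).mulVec x) + d i)))
        + ∑ i, (α i / 2) * ((1/2) * (x ⬝ᵥ (B i).mulVec x) + c i)^2)
    (Ga : ((Fin p ⊕ Fin r) → ℝ) → Matrix (Fin n) (Fin n) ℝ)
    (hGa : Ga = fun ζ => A + ∑ i, ζ (Sum.inl i) • Q i + ∑ i, ζ (Sum.inr i) • B i)
    (Dual : ((Fin p ⊕ Fin r) → ℝ) → ℝ)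
    (hDual : Dual = fun ζ => -(1/2) * (f ⬝ᵥ (Ga ζ)⁻¹.mulVec f)
        - ((1/β) * ((∑ i, ζ (Sum.inl i) * Real.log (ζ (Sum.inl i)))
            + (1 - ∑ i, ζ (Sum.inl i)) * Real.log (1 - ∑ i, ζ (Sum.inl i)))
          - ∑ i, d i * ζ (Sum.inl i))
        - (∑ i, (ζ (Sum.inr i))^2 / (2 * α i) - ∑ i, c i * ζ (Sum.inr i)))
    (zb : (Fin p ⊕ Fin r) → ℝ)
    (hpos : ∀ i, 0 < zb (Sum.inl i)) (hsum : ∑ i, zb (Sum.inl i) < 1)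
    (hdet : (Ga zb).det ≠ 0)
    (hcrit1 : ∀ i, (1/2) * (f ⬝ᵥ ((Ga zb)⁻¹ * Q i * (Ga zb)⁻¹).mulVec f) + d i
        = (1/β) * Real.log (zb (Sum.inl i) / (1 - ∑ j, zb (Sum.inl j))))
    (hcrit2 : ∀ i, (1/2) * (f ⬝ᵥ ((Ga zb)⁻¹ * B i * (Ga zb)⁻¹).mulVec f) + c i
        = zb (Sum.inr i) / α i)
    (xb : Fin n → ℝ) (hxb : xb = (Ga zb)⁻¹.mulVec f)
    (hnegdef : ∀ x : Fin n → ℝ, x ≠ 0 → x ⬝ᵥ (Ga zb).mulVec x < 0)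
    (hmax : IsLocalMax Prim xb) :
    IsLocalMaxOn Dual
      {ζ : (Fin p ⊕ Fin r) → ℝ | (∀ i, 0 < ζ (Sum.inl i)) ∧ (∑ i, ζ (Sum.inl i)) < 1 ∧
        (Ga ζ).det ≠ 0 ∧ ∀ x : Fin n → ℝ, x ≠ 0 → x ⬝ᵥ (Ga ζ).mulVec x < 0} zb ∧
    Prim xb = Dual zb := by
  -- quadratic form expansion
  have hexp : ∀ (ζ : (Fin p ⊕ Fin r) → ℝ) (x : Fin n → ℝ),
      x ⬝ᵥ (Ga ζ).mulVec x = x ⬝ᵥ A.mulVec x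
        + ∑ i, ζ (Sum.inl i) * (x ⬝ᵥ (Q i).mulVec x)
        + ∑ i, ζ (Sum.inr i) * (x ⬝ᵥ (B i).mulVec x) := by
    intro ζ x
    rw [hGa]
    simp only [Matrix.add_mulVec, sum_mulVec', Matrix.smul_mulVec,
      dotProduct_add, dot_sum', dotProduct_smul, smul_eq_mul]
  -- Dual equals XiFun at the canonical x
  have hDualXi : ∀ ζ : (Fin p ⊕ Fin r) → ℝ, (Ga ζ).det ≠ 0 →
      Dual ζ = XiFun A Q B f d c β α (fun i => ζ (Sum.inl i)) (fun i => ζ (Sum.inr i))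
        ((Ga ζ)⁻¹.mulVec f) := by
    intro ζ hd
    have hf : (Ga ζ).mulVec ((Ga ζ)⁻¹.mulVec f) = f := by
      rw [Matrix.mulVec_mulVec, Matrix.mul_nonsing_inv _ (isUnit_iff_ne_zero.mpr hd),
        Matrix.one_mulVec]
    set x := (Ga ζ)⁻¹.mulVec f with hx
    have h2 : x ⬝ᵥ (Ga ζ).mulVec x = f ⬝ᵥ x := by
      rw [hf, dotProduct_comm]
    have hq : f ⬝ᵥ x = x ⬝ᵥ A.mulVec x
        + ∑ i, ζ (Sum.inl i) * (x ⬝ᵥ (Q i).mulVec x)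
        + ∑ i, ζ (Sum.inr i) * (x ⬝ᵥ (B i).mulVec x) := by
      rw [← h2, hexp]
    have s1 : ∑ i, ζ (Sum.inl i) * ((1/2) * (x ⬝ᵥ (Q i).mulVec x) + d i)
        = (1/2) * (∑ i, ζ (Sum.inl i) * (x ⬝ᵥ (Q i).mulVec x)) + ∑ i, d i * ζ (Sum.inl i) := by
      rw [Finset.mul_sum, ← Finset.sum_add_distrib]
      apply Finset.sum_congr rfl; intro i _; ring
    have s2 : ∑ i, ζ (Sum.inr i) * ((1/2) * (x ⬝ᵥ (B i).mulVec x) + c i)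
        = (1/2) * (∑ i, ζ (Sum.inr i) * (x ⬝ᵥ (B i).mulVec x)) + ∑ i, c i * ζ (Sum.inr i) := by
      rw [Finset.mul_sum, ← Finset.sum_add_distrib]
      apply Finset.sum_congr rfl; intro i _; ring
    rw [hDual]
    unfold XiFun
    simp only [← hx]
    rw [s1, s2]
    linarith [hq]
  -- symmetry of Ga zb and transfer of critical point conditions
  have hGs : (Ga zb)ᵀ = Ga zb := by
    rw [hGa]
    simp only [Matrix.transpose_add, Matrix.transpose_sum, Matrix.transpose_smul]
    rw [hA.eq]
    congr 1
    · congr 1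
      apply Finset.sum_congr rfl; intro i _; rw [(hQ i).eq]
    · apply Finset.sum_congr rfl; intro i _; rw [(hB i).eq]
  have hGinvs : ((Ga zb)⁻¹)ᵀ = (Ga zb)⁻¹ := by
    rw [Matrix.transpose_nonsing_inv, hGs]
  have hsymM : ∀ (M : Matrix (Fin n) (Fin n) ℝ),
      f ⬝ᵥ ((Ga zb)⁻¹ * M * (Ga zb)⁻¹).mulVec f = xb ⬝ᵥ M.mulVec xb := by
    intro M
    rw [hxb, ← Matrix.mulVec_mulVec, ← Matrix.mulVec_mulVec,
      Matrix.dotProduct_mulVec f (Ga zb)⁻¹, ← Matrix.mulVec_transpose, hGinvs]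
  have hu : ∀ i, (1/2) * (xb ⬝ᵥ (Q i).mulVec xb) + d i
      = (1/β) * Real.log (zb (Sum.inl i) / (1 - ∑ j, zb (Sum.inl j))) := by
    intro i; rw [← hsymM]; exact hcrit1 i
  have hv : ∀ i, (1/2) * (xb ⬝ᵥ (B i).mulVec xb) + c i = zb (Sum.inr i) / α i := by
    intro i; rw [← hsymM]; exact hcrit2 i
  set τ₀ := 1 - ∑ i, zb (Sum.inl i) with ht0def
  have ht0 : 0 < τ₀ := by simp [ht0def]; linarith
  -- the equality Prim xb = Dual zb
  have heq : Prim xb = Dual zb := by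
    rw [hDualXi zb hdet, ← hxb, hPrim]
    simp only
    unfold XiFun
    have eexp : ∀ i, Real.exp (β * ((1/2) * (xb ⬝ᵥ (Q i).mulVec xb) + d i))
        = zb (Sum.inl i) / τ₀ := by
      intro i
      rw [hu i]
      have : β * ((1/β) * Real.log (zb (Sum.inl i) / τ₀)) = Real.log (zb (Sum.inl i) / τ₀) := by
        field_simp
      rw [this, Real.exp_log (div_pos (hpos i) ht0)]
    have elog : (1:ℝ) + ∑ i, Real.exp (β * ((1/2) * (xb ⬝ᵥ (Q i).mulVec xb) + d i)) = 1/τ₀ := by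
      rw [Finset.sum_congr rfl (fun i _ => eexp i)]
      rw [← Finset.sum_div]
      field_simp [ht0def]
      linarith [ht0def]
    have elogv : (1/β) * Real.log (1 + ∑ i, Real.exp (β * ((1/2) * (xb ⬝ᵥ (Q i).mulVec xb) + d i)))
        = -(1/β) * Real.log τ₀ := by
      rw [elog, Real.log_div one_ne_zero ht0.ne', Real.log_one]
      ring
    have eB : ∑ i, (α i / 2) * ((1/2) * (xb ⬝ᵥ (B i).mulVec xb) + c i)^2
        = ∑ i, (zb (Sum.inr i))^2 / (2 * α i) := by
      apply Finset.sum_congr rfl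
      intro i _
      rw [hv i]
      have := (hα i).ne'
      field_simp
    have eτu : ∑ i, zb (Sum.inl i) * ((1/2) * (xb ⬝ᵥ (Q i).mulVec xb) + d i)
        = (1/β) * ((∑ i, zb (Sum.inl i) * Real.log (zb (Sum.inl i)))
            - (∑ i, zb (Sum.inl i)) * Real.log τ₀) := by
      have step : ∑ i, zb (Sum.inl i) * ((1/2) * (xb ⬝ᵥ (Q i).mulVec xb) + d i)
          = ∑ i, (1/β) * (zb (Sum.inl i) * Real.log (zb (Sum.inl i))
              - zb (Sum.inl i) * Real.log τ₀) := by
        apply Finset.sum_congr rfl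
        intro i _
        rw [hu i, Real.log_div (hpos i).ne' ht0.ne']
        ring
      rw [step, ← Finset.mul_sum, Finset.sum_sub_distrib, ← Finset.sum_mul]
    have eσv : ∑ i, zb (Sum.inr i) * ((1/2) * (xb ⬝ᵥ (B i).mulVec xb) + c i)
        = ∑ i, (zb (Sum.inr i))^2 / (α i) := by
      apply Finset.sum_congr rfl
      intro i _
      rw [hv i]
      have := (hα i).ne'
      field_simp
    have eσ2 : ∑ i, (zb (Sum.inr i))^2 / (α i)
        = ∑ i, (zb (Sum.inr i))^2 / (2 * α i) + ∑ i, (zb (Sum.inr i))^2 / (2 * α i) := by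
      rw [← Finset.sum_add_distrib]
      apply Finset.sum_congr rfl
      intro i _
      have := (hα i).ne'
      field_simp
      ring
    have eent : (1/β) * ((∑ i, zb (Sum.inl i) * Real.log (zb (Sum.inl i)))
        + τ₀ * Real.log τ₀)
        = (1/β) * ((∑ i, zb (Sum.inl i) * Real.log (zb (Sum.inl i))))
          + (1/β) * τ₀ * Real.log τ₀ := by ring
    have hτ0lin : (∑ i, zb (Sum.inl i)) = 1 - τ₀ := by rw [ht0def]; ring
    have efix : ∑ i, (zb (Sum.inr i))^2 * (α i)⁻¹ * (1/2)
        = ∑ i, (zb (Sum.inr i))^2 / (2 * α i) := by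
      apply Finset.sum_congr rfl
      intro i _
      have h := (hα i).ne'
      field_simp
      try ring
      try tauto
    rw [elogv, eB, eτu, eσv, eσ2, hτ0lin]
    ring_nf
  refine ⟨?_, heq⟩
  -- local maximality on the dual feasible set
  have hGacont : Continuous Ga := by
    rw [hGa]
    refine (continuous_const.add ?_).add ?_
    · exact continuous_finset_sum _ fun i _ => (continuous_apply (Sum.inl i)).smul continuous_const
    · exact continuous_finset_sum _ fun i _ => (continuous_apply (Sum.inr i)).smul continuous_const
  have hψeq : ∀ ζ : (Fin p ⊕ Fin r) → ℝ,
      ((Ga ζ).det)⁻¹ • ((Ga ζ).adjugate.mulVec f) = (Ga ζ)⁻¹.mulVec f := by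
    intro ζ
    rw [Matrix.inv_def, Ring.inverse_eq_inv', Matrix.smul_mulVec]
  have hψcont : ContinuousAt (fun ζ => ((Ga ζ).det)⁻¹ • ((Ga ζ).adjugate.mulVec f)) zb := by
    have h1 : ContinuousAt (fun ζ => ((Ga ζ).det)⁻¹) zb :=
      (hGacont.matrix_det.continuousAt).inv₀ hdet
    have h2 : Continuous (fun ζ => (Ga ζ).adjugate.mulVec f) :=
      (hGacont.matrix_adjugate).matrix_mulVec continuous_const
    exact h1.smul h2.continuousAt
  have hψzb : ((Ga zb).det)⁻¹ • ((Ga zb).adjugate.mulVec f) = xb := by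
    rw [hψeq, hxb]
  have htend : Filter.Tendsto (fun ζ => ((Ga ζ).det)⁻¹ • ((Ga ζ).adjugate.mulVec f))
      (nhds zb) (nhds xb) := by
    rw [← hψzb]
    exact hψcont
  have hev : ∀ᶠ ζ in nhds zb,
      Prim (((Ga ζ).det)⁻¹ • ((Ga ζ).adjugate.mulVec f)) ≤ Prim xb :=
    htend.eventually hmax
  have hev' := hev.filter_mono (nhdsWithin_le_nhds (s :=
      {ζ : (Fin p ⊕ Fin r) → ℝ | (∀ i, 0 < ζ (Sum.inl i)) ∧ (∑ i, ζ (Sum.inl i)) < 1 ∧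
        (Ga ζ).det ≠ 0 ∧ ∀ x : Fin n → ℝ, x ≠ 0 → x ⬝ᵥ (Ga ζ).mulVec x < 0}))
  show ∀ᶠ ζ in nhdsWithin zb _, Dual ζ ≤ Dual zb
  filter_upwards [hev', eventually_mem_nhdsWithin] with ζ h1 h2
  obtain ⟨hp1, hp2, hp3, _⟩ := h2
  calc Dual ζ = XiFun A Q B f d c β α (fun i => ζ (Sum.inl i)) (fun i => ζ (Sum.inr i))
        ((Ga ζ)⁻¹.mulVec f) := hDualXi ζ hp3
    _ ≤ (1/2) * (((Ga ζ)⁻¹.mulVec f) ⬝ᵥ A.mulVec ((Ga ζ)⁻¹.mulVec f)) - f ⬝ᵥ ((Ga ζ)⁻¹.mulVec f)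
        + (1/β) * Real.log (1 + ∑ i, Real.exp (β * ((1/2) * (((Ga ζ)⁻¹.mulVec f) ⬝ᵥ (Q i).mulVec ((Ga ζ)⁻¹.mulVec f)) + d i)))
        + ∑ i, (α i / 2) * ((1/2) * (((Ga ζ)⁻¹.mulVec f) ⬝ᵥ (B i).mulVec ((Ga ζ)⁻¹.mulVec f)) + c i)^2 :=
      XiFun_le_prim A Q B f d c β hβ α hα _ _ _ hp1 hp2
    _ = Prim ((Ga ζ)⁻¹.mulVec f) := by rw [hPrim]
    _ = Prim (((Ga ζ).det)⁻¹ • ((Ga ζ).adjugate.mulVec f)) := by rw [hψeq]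
    _ ≤ Prim xb := h1
    _ = Dual zb := heq
end

section
/- Double-min duality, case m = n (dual to primal direction): Suppose m = n. If ζ̄ ∈ 𝓢ₐ⁻ is a critical point of Π^d and is a local minimizer of Π^d on 𝓢ₐ⁻, then x̄ = Gₐ(ζ̄)⁻¹f is a local minimizer of Π on ℝⁿ, and Π(x̄) = Π^d(ζ̄). -/
open Matrix Filter
set_option maxHeartbeats 1000000

lemma sum_mulVec'_s4 {ι m n : Type*} [Fintype n] (s : Finset ι)
    (M : ι → Matrix m n ℝ) (x : n → ℝ) :
    (∑ i ∈ s, M i).mulVec x = ∑ i ∈ s, (M i).mulVec x := by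
  ext j
  simp only [Matrix.mulVec, dotProduct, Matrix.sum_apply, Finset.sum_apply,
    Finset.sum_mul]
  rw [Finset.sum_comm]

lemma gibbs {p : ℕ} (τ y : Fin p → ℝ) (hτ : ∀ i, 0 < τ i) (hs : ∑ i, τ i < 1) :
    ∑ i, τ i * y i ≤ Real.log (1 + ∑ i, Real.exp (y i))
      + ((∑ i, τ i * Real.log (τ i)) + (1 - ∑ i, τ i) * Real.log (1 - ∑ i, τ i)) := by
  set T : ℝ := 1 + ∑ i, Real.exp (y i) with hT
  have hTpos : 0 < T := by
    have : (0:ℝ) ≤ ∑ i, Real.exp (y i) :=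
      Finset.sum_nonneg fun i _ => (Real.exp_pos _).le
    linarith
  have hs1 : 0 < 1 - ∑ i, τ i := by linarith
  have h1 : ∀ i, τ i * y i - τ i * Real.log (τ i) - τ i * Real.log T
      ≤ Real.exp (y i) / T - τ i := by
    intro i
    have hpos : 0 < Real.exp (y i) / (τ i * T) :=
      div_pos (Real.exp_pos _) (mul_pos (hτ i) hTpos)
    have hlog := Real.log_le_sub_one_of_pos hpos
    rw [Real.log_div (Real.exp_pos _).ne' (mul_pos (hτ i) hTpos).ne', Real.log_exp,
      Real.log_mul (hτ i).ne' hTpos.ne'] at hlog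
    have := mul_le_mul_of_nonneg_left hlog (hτ i).le
    have hne : τ i ≠ 0 := (hτ i).ne'
    calc τ i * y i - τ i * Real.log (τ i) - τ i * Real.log T
        = τ i * (y i - (Real.log (τ i) + Real.log T)) := by ring
      _ ≤ τ i * (Real.exp (y i) / (τ i * T) - 1) := this
      _ = Real.exp (y i) / T - τ i := by field_simp
  have hsum1 := Finset.sum_le_sum (fun i (_ : i ∈ Finset.univ) => h1 i)
  have h0 : - (1 - ∑ i, τ i) * Real.log (1 - ∑ i, τ i)
      - (1 - ∑ i, τ i) * Real.log T ≤ 1 / T - (1 - ∑ i, τ i) := by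
    have hpos : 0 < 1 / ((1 - ∑ i, τ i) * T) :=
      div_pos one_pos (mul_pos hs1 hTpos)
    have hlog := Real.log_le_sub_one_of_pos hpos
    rw [one_div, Real.log_inv, Real.log_mul hs1.ne' hTpos.ne'] at hlog
    have h2 := mul_le_mul_of_nonneg_left hlog hs1.le
    have h3 : (1 - ∑ i, τ i) * (((1 - ∑ i, τ i) * T)⁻¹ - 1) = 1 / T - (1 - ∑ i, τ i) := by
      rw [mul_sub, mul_inv, ← mul_assoc, mul_inv_cancel₀ hs1.ne', one_mul, one_div, mul_one]
    calc -(1 - ∑ i, τ i) * Real.log (1 - ∑ i, τ i) - (1 - ∑ i, τ i) * Real.log T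
        = (1 - ∑ i, τ i) * (-(Real.log (1 - ∑ i, τ i) + Real.log T)) := by ring
      _ ≤ (1 - ∑ i, τ i) * (((1 - ∑ i, τ i) * T)⁻¹ - 1) := h2
      _ = 1 / T - (1 - ∑ i, τ i) := h3
  have hsumexp : ∑ i, Real.exp (y i) / T = (T - 1) / T := by
    rw [← Finset.sum_div]; congr 1; rw [hT]; ring
  have hexpand : ∑ i, (τ i * y i - τ i * Real.log (τ i) - τ i * Real.log T)
      = ∑ i, τ i * y i - ∑ i, τ i * Real.log (τ i) - (∑ i, τ i) * Real.log T := by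
    rw [Finset.sum_sub_distrib, Finset.sum_sub_distrib, Finset.sum_mul]
  have hexpand2 : ∑ i, (Real.exp (y i) / T - τ i)
      = (T - 1) / T - ∑ i, τ i := by
    rw [Finset.sum_sub_distrib, hsumexp]
  rw [hexpand, hexpand2] at hsum1
  have hTfrac : (T - 1) / T + 1 / T = 1 := by field_simp; ring
  have hTlog2 : Real.log T = Real.log (1 + ∑ i, Real.exp (y i)) := by rw [hT]
  nlinarith [hsum1, h0, hTfrac]

lemma negdef_eventually {n : ℕ} (hn : 0 < n) (M₀ : Matrix (Fin n) (Fin n) ℝ)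
    (h : ∀ x : Fin n → ℝ, x ≠ 0 → x ⬝ᵥ M₀.mulVec x < 0) :
    ∀ᶠ M in nhds M₀, ∀ x : Fin n → ℝ, x ≠ 0 → x ⬝ᵥ M.mulVec x < 0 := by
  -- max of quadratic form on the unit sphere
  haveI : Nonempty (Fin n) := ⟨⟨0, hn⟩⟩
  have hsph : (Metric.sphere (0 : Fin n → ℝ) 1).Nonempty := by
    rw [NormedSpace.sphere_nonempty]; norm_num
  have hcomp : IsCompact (Metric.sphere (0 : Fin n → ℝ) 1) := isCompact_sphere _ _
  have hcont : Continuous fun x : Fin n → ℝ => x ⬝ᵥ M₀.mulVec x := by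
    have : Continuous fun x : Fin n → ℝ => (x, x) := continuous_id.prodMk continuous_id
    exact (continuous_fst.dotProduct
      ((continuous_const : Continuous fun _ : (Fin n → ℝ) × (Fin n → ℝ) => M₀).matrix_mulVec
        continuous_snd)).comp this
  obtain ⟨z, hz, hzmax⟩ := hcomp.exists_isMaxOn hsph hcont.continuousOn
  have hznorm : ‖z‖ = 1 := by simpa using hz
  have hzne : z ≠ 0 := by intro h0; rw [h0] at hznorm; simp at hznorm
  set δ : ℝ := -(z ⬝ᵥ M₀.mulVec z) with hδ
  have hδpos : 0 < δ := by have := h z hzne; linarith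
  set ε : ℝ := δ / (n^2 + 1) with hε
  have hεpos : 0 < ε := by positivity
  -- eventual entrywise closeness
  have hev : ∀ᶠ M in nhds M₀, ∀ ij : Fin n × Fin n,
      |M ij.1 ij.2 - M₀ ij.1 ij.2| < ε := by
    rw [eventually_all]
    intro ij
    have hc : Continuous fun M : Matrix (Fin n) (Fin n) ℝ => M ij.1 ij.2 :=
      continuous_id.matrix_elem ij.1 ij.2
    have := hc.continuousAt (x := M₀)
    have h2 : ∀ᶠ y : ℝ in nhds (M₀ ij.1 ij.2), |y - M₀ ij.1 ij.2| < ε := by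
      filter_upwards [Metric.ball_mem_nhds (M₀ ij.1 ij.2) hεpos] with y hy
      rwa [Metric.mem_ball, Real.dist_eq] at hy
    exact this.eventually h2
  filter_upwards [hev] with M hM x hx
  -- reduce to unit sphere
  have hxnorm : ‖x‖ ≠ 0 := norm_ne_zero_iff.2 hx
  set u : Fin n → ℝ := ‖x‖⁻¹ • x with hu
  have hunorm : ‖u‖ = 1 := by
    rw [hu, norm_smul, norm_inv, norm_norm, inv_mul_cancel₀ hxnorm]
  have hune : u ≠ 0 := by
    intro h0; rw [h0] at hunorm; simp at hunorm
  have humem : u ∈ Metric.sphere (0 : Fin n → ℝ) 1 := by simpa using hunorm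
  have hub : ∀ i, |u i| ≤ 1 := by
    intro i
    calc |u i| = ‖u i‖ := (Real.norm_eq_abs _).symm
      _ ≤ ‖u‖ := norm_le_pi_norm u i
      _ = 1 := hunorm
  -- quadratic form difference bound
  have hdiff : |u ⬝ᵥ (M - M₀).mulVec u| ≤ (n:ℝ)^2 * ε := by
    have : u ⬝ᵥ (M - M₀).mulVec u = ∑ i, ∑ j, u i * ((M - M₀) i j * u j) := by
      simp [Matrix.mulVec, dotProduct, Finset.mul_sum]
    rw [this]
    calc |∑ i, ∑ j, u i * ((M - M₀) i j * u j)|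
        ≤ ∑ i, |∑ j, u i * ((M - M₀) i j * u j)| := Finset.abs_sum_le_sum_abs _ _
      _ ≤ ∑ i : Fin n, ∑ j : Fin n, |u i * ((M - M₀) i j * u j)| :=
          Finset.sum_le_sum fun i _ => Finset.abs_sum_le_sum_abs _ _
      _ ≤ ∑ i : Fin n, ∑ j : Fin n, ε := by
          refine Finset.sum_le_sum fun i _ => Finset.sum_le_sum fun j _ => ?_
          rw [abs_mul, abs_mul]
          have h1 := hub i
          have h2 := hub j
          have h3 : |(M - M₀) i j| < ε := by
            have := hM (i, j); simpa [Matrix.sub_apply] using this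
          have h4 : |u i| * (|(M - M₀) i j| * |u j|) ≤ 1 * (ε * 1) := by
            apply mul_le_mul h1 _ (by positivity) (by norm_num)
            exact mul_le_mul h3.le h2 (abs_nonneg _) hεpos.le
          simpa using h4
      _ = (n:ℝ)^2 * ε := by simp [Finset.sum_const]; ring
  have huM₀ : u ⬝ᵥ M₀.mulVec u ≤ -δ := by
    have h5 : u ⬝ᵥ M₀.mulVec u ≤ z ⬝ᵥ M₀.mulVec z := hzmax humem
    rw [hδ]; linarith
  have huM : u ⬝ᵥ M.mulVec u < 0 := by
    have hsplit : u ⬝ᵥ M.mulVec u = u ⬝ᵥ M₀.mulVec u + u ⬝ᵥ (M - M₀).mulVec u := by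
      rw [Matrix.sub_mulVec, dotProduct_sub]; ring
    have hbound : u ⬝ᵥ (M - M₀).mulVec u ≤ (n:ℝ)^2 * ε := le_of_abs_le hdiff
    have hlt : (n:ℝ)^2 * ε < δ := by
      have h0 : (0:ℝ) < (n:ℝ)^2+1 := by positivity
      rw [hε, mul_div_assoc', div_lt_iff₀ h0]
      nlinarith [hδpos]
    rw [hsplit]; linarith
  -- scale back
  have hscale : x ⬝ᵥ M.mulVec x = ‖x‖^2 * (u ⬝ᵥ M.mulVec u) := by
    have hxu : x = ‖x‖ • u := by
      rw [hu, smul_smul, mul_inv_cancel₀ hxnorm, one_smul]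
    calc x ⬝ᵥ M.mulVec x = (‖x‖ • u) ⬝ᵥ M.mulVec (‖x‖ • u) := by rw [← hxu]
      _ = ‖x‖ * (‖x‖ * (u ⬝ᵥ M.mulVec u)) := by
          rw [Matrix.mulVec_smul, smul_dotProduct, dotProduct_smul]
          simp [smul_eq_mul]
      _ = ‖x‖^2 * (u ⬝ᵥ M.mulVec u) := by ring
  rw [hscale]
  have : 0 < ‖x‖^2 := by positivity
  exact mul_neg_of_pos_of_neg this huM

lemma midpoint_mul_log_strict {a h : ℝ} (h1 : 0 < a - h) (h2 : 0 < a + h) (hh : h ≠ 0) :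
    2 * (a * Real.log a) < (a - h) * Real.log (a - h) + (a + h) * Real.log (a + h) := by
  have hne : a - h ≠ a + h := by intro he; apply hh; linarith
  have := Real.strictConvexOn_mul_log.2 (Set.mem_Ici.2 h1.le) (Set.mem_Ici.2 h2.le) hne
    (by norm_num : (0:ℝ) < 1/2) (by norm_num : (0:ℝ) < 1/2) (by norm_num)
  simp only [smul_eq_mul] at this
  have hmid : (1/2:ℝ) * (a - h) + (1/2:ℝ) * (a + h) = a := by ring
  rw [hmid] at this
  linarith

lemma midpoint_mul_log {a h : ℝ} (h1 : 0 < a - h) (h2 : 0 < a + h) :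
    2 * (a * Real.log a) ≤ (a - h) * Real.log (a - h) + (a + h) * Real.log (a + h) := by
  rcases eq_or_ne h 0 with rfl | hh
  · simp; ring_nf; rfl
  · exact (midpoint_mul_log_strict h1 h2 hh).le
lemma strict_mid {p r : ℕ} {β : ℝ} (hβ : 0 < β) {α : Fin r → ℝ} (hα : ∀ i, 0 < α i)
    (d : Fin p → ℝ) (c : Fin r → ℝ) (a u : Fin p → ℝ) (b w : Fin r → ℝ)
    (hne : (∃ i, u i ≠ 0) ∨ (∃ i, w i ≠ 0))
    (hposP : ∀ i, 0 < a i + u i) (hposM : ∀ i, 0 < a i - u i)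
    (hsP : ∑ i, (a i + u i) < 1) (hsM : ∑ i, (a i - u i) < 1) :
    2 * (((1/β) * ((∑ i, a i * Real.log (a i))
        + (1 - ∑ i, a i) * Real.log (1 - ∑ i, a i)) - ∑ i, d i * a i)
      + (∑ i, (b i)^2 / (2 * α i) - ∑ i, c i * b i))
    < (((1/β) * ((∑ i, (a i + u i) * Real.log (a i + u i))
        + (1 - ∑ i, (a i + u i)) * Real.log (1 - ∑ i, (a i + u i))) - ∑ i, d i * (a i + u i))
      + (∑ i, (b i + w i)^2 / (2 * α i) - ∑ i, c i * (b i + w i)))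
    + (((1/β) * ((∑ i, (a i - u i) * Real.log (a i - u i))
        + (1 - ∑ i, (a i - u i)) * Real.log (1 - ∑ i, (a i - u i))) - ∑ i, d i * (a i - u i))
      + (∑ i, (b i - w i)^2 / (2 * α i) - ∑ i, c i * (b i - w i))) := by
  have hβ' : (0:ℝ) < 1/β := by positivity
  have hsplitP : ∑ i, (a i + u i) = ∑ i, a i + ∑ i, u i := Finset.sum_add_distrib
  have hsplitM : ∑ i, (a i - u i) = ∑ i, a i - ∑ i, u i := Finset.sum_sub_distrib _ _
  -- inner entropy terms
  have hEle : 2 * ∑ i, a i * Real.log (a i)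
      ≤ ∑ i, (a i - u i) * Real.log (a i - u i) + ∑ i, (a i + u i) * Real.log (a i + u i) := by
    have h := Finset.sum_le_sum
      (fun i (_ : i ∈ Finset.univ) => midpoint_mul_log (hposM i) (hposP i))
    rw [← Finset.mul_sum, Finset.sum_add_distrib] at h
    linarith
  have hEstrict : (∃ i, u i ≠ 0) → 2 * ∑ i, a i * Real.log (a i)
      < ∑ i, (a i - u i) * Real.log (a i - u i) + ∑ i, (a i + u i) * Real.log (a i + u i) := by
    rintro ⟨j, hj⟩
    have h := Finset.sum_lt_sum
      (fun i (_ : i ∈ Finset.univ) => midpoint_mul_log (hposM i) (hposP i))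
      ⟨j, Finset.mem_univ j, midpoint_mul_log_strict (hposM j) (hposP j) hj⟩
    rw [← Finset.mul_sum, Finset.sum_add_distrib] at h
    linarith
  -- outer entropy term
  have p1 : 0 < (1 - ∑ i, a i) - ∑ i, u i := by
    have := hsP; rw [hsplitP] at this; linarith
  have p2 : 0 < (1 - ∑ i, a i) + ∑ i, u i := by
    have := hsM; rw [hsplitM] at this; linarith
  have hOut : 2 * ((1 - ∑ i, a i) * Real.log (1 - ∑ i, a i))
      ≤ (1 - ∑ i, (a i + u i)) * Real.log (1 - ∑ i, (a i + u i))
        + (1 - ∑ i, (a i - u i)) * Real.log (1 - ∑ i, (a i - u i)) := by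
    have eP : 1 - ∑ i, (a i + u i) = (1 - ∑ i, a i) - ∑ i, u i := by rw [hsplitP]; ring
    have eM : 1 - ∑ i, (a i - u i) = (1 - ∑ i, a i) + ∑ i, u i := by rw [hsplitM]; ring
    rw [eP, eM]
    exact midpoint_mul_log p1 p2
  -- quadratic terms
  have hQdiff : ∀ i : Fin r, (b i + w i)^2/(2*α i) + (b i - w i)^2/(2*α i)
      - 2*((b i)^2/(2*α i)) = (w i)^2 / (α i) := by
    intro i; have := (hα i).ne'; field_simp; ring
  have hQle : 2 * ∑ i, (b i)^2/(2*α i)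
      ≤ ∑ i, (b i + w i)^2/(2*α i) + ∑ i, (b i - w i)^2/(2*α i) := by
    have h := Finset.sum_le_sum (fun i (_ : i ∈ Finset.univ) =>
      (by nlinarith [hQdiff i, div_nonneg (sq_nonneg (w i)) (hα i).le] :
        2*((b i)^2/(2*α i)) ≤ (b i + w i)^2/(2*α i) + (b i - w i)^2/(2*α i)))
    rw [← Finset.mul_sum, Finset.sum_add_distrib] at h
    linarith
  have hQstrict : (∃ i, w i ≠ 0) → 2 * ∑ i, (b i)^2/(2*α i)
      < ∑ i, (b i + w i)^2/(2*α i) + ∑ i, (b i - w i)^2/(2*α i) := by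
    rintro ⟨j, hj⟩
    have hj' : 0 < (w j)^2 / (α j) := div_pos (by positivity) (hα j)
    have h := Finset.sum_lt_sum (fun i (_ : i ∈ Finset.univ) =>
      (by nlinarith [hQdiff i, div_nonneg (sq_nonneg (w i)) (hα i).le] :
        2*((b i)^2/(2*α i)) ≤ (b i + w i)^2/(2*α i) + (b i - w i)^2/(2*α i)))
      ⟨j, Finset.mem_univ j, by nlinarith [hQdiff j, hj']⟩
    rw [← Finset.mul_sum, Finset.sum_add_distrib] at h
    linarith
  -- linear terms
  have hdP : ∑ i, d i * (a i + u i) = ∑ i, d i * a i + ∑ i, d i * u i := by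
    rw [← Finset.sum_add_distrib]; exact Finset.sum_congr rfl fun i _ => by ring
  have hdM : ∑ i, d i * (a i - u i) = ∑ i, d i * a i - ∑ i, d i * u i := by
    rw [← Finset.sum_sub_distrib]; exact Finset.sum_congr rfl fun i _ => by ring
  have hcP : ∑ i, c i * (b i + w i) = ∑ i, c i * b i + ∑ i, c i * w i := by
    rw [← Finset.sum_add_distrib]; exact Finset.sum_congr rfl fun i _ => by ring
  have hcM : ∑ i, c i * (b i - w i) = ∑ i, c i * b i - ∑ i, c i * w i := by
    rw [← Finset.sum_sub_distrib]; exact Finset.sum_congr rfl fun i _ => by ring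
  rcases hne with h | h
  · have hbig := hEstrict h
    have h1 := mul_lt_mul_of_pos_left hbig hβ'
    have h2 := mul_le_mul_of_nonneg_left hOut hβ'.le
    rw [hdP, hdM, hcP, hcM]
    linarith [h1, h2, hQle]
  · have hbig := hQstrict h
    have h1 := mul_le_mul_of_nonneg_left hEle hβ'.le
    have h2 := mul_le_mul_of_nonneg_left hOut hβ'.le
    rw [hdP, hdM, hcP, hcM]
    linarith [h1, h2, hbig]

lemma dotProduct_sum' {ι n : Type*} [Fintype n] (s : Finset ι) (v : n → ℝ) (w : ι → n → ℝ) :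
    v ⬝ᵥ (∑ i ∈ s, w i) = ∑ i ∈ s, v ⬝ᵥ w i := by
  simp only [dotProduct, Finset.sum_apply, Finset.mul_sum]
  exact Finset.sum_comm

theorem double_min_duality_eq_dual_to_primal
    {n p r : ℕ} (hn : 0 < n) (hp : 0 < p) (hr : 0 < r)
    (A : Matrix (Fin n) (Fin n) ℝ) (hA : A.IsSymm)
    (Q : Fin p → Matrix (Fin n) (Fin n) ℝ) (hQ : ∀ i, (Q i).IsSymm)
    (B : Fin r → Matrix (Fin n) (Fin n) ℝ) (hB : ∀ i, (B i).IsSymm)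
    (f : Fin n → ℝ) (d : Fin p → ℝ) (c : Fin r → ℝ)
    (β : ℝ) (hβ : 0 < β) (α : Fin r → ℝ) (hα : ∀ i, 0 < α i)
    (Prim : (Fin n → ℝ) → ℝ)
    (hPrim : Prim = fun x => (1/2) * (x ⬝ᵥ A.mulVec x) - f ⬝ᵥ x
        + (1/β) * Real.log (1 + ∑ i, Real.exp (β * ((1/2) * (x ⬝ᵥ (Q i).mulVec x) + d i)))
        + ∑ i, (α i / 2) * ((1/2) * (x ⬝ᵥ (B i).mulVec x) + c i)^2)
    (Ga : ((Fin p ⊕ Fin r) → ℝ) → Matrix (Fin n) (Fin n) ℝ)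
    (hGa : Ga = fun ζ => A + ∑ i, ζ (Sum.inl i) • Q i + ∑ i, ζ (Sum.inr i) • B i)
    (Dual : ((Fin p ⊕ Fin r) → ℝ) → ℝ)
    (hDual : Dual = fun ζ => -(1/2) * (f ⬝ᵥ (Ga ζ)⁻¹.mulVec f)
        - ((1/β) * ((∑ i, ζ (Sum.inl i) * Real.log (ζ (Sum.inl i)))
            + (1 - ∑ i, ζ (Sum.inl i)) * Real.log (1 - ∑ i, ζ (Sum.inl i)))
          - ∑ i, d i * ζ (Sum.inl i))
        - (∑ i, (ζ (Sum.inr i))^2 / (2 * α i) - ∑ i, c i * ζ (Sum.inr i)))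
    (zb : (Fin p ⊕ Fin r) → ℝ)
    (hpos : ∀ i, 0 < zb (Sum.inl i)) (hsum : ∑ i, zb (Sum.inl i) < 1)
    (hdet : (Ga zb).det ≠ 0)
    (hcrit1 : ∀ i, (1/2) * (f ⬝ᵥ ((Ga zb)⁻¹ * Q i * (Ga zb)⁻¹).mulVec f) + d i
        = (1/β) * Real.log (zb (Sum.inl i) / (1 - ∑ j, zb (Sum.inl j))))
    (hcrit2 : ∀ i, (1/2) * (f ⬝ᵥ ((Ga zb)⁻¹ * B i * (Ga zb)⁻¹).mulVec f) + c i
        = zb (Sum.inr i) / α i)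
    (xb : Fin n → ℝ) (hxb : xb = (Ga zb)⁻¹.mulVec f)
    (hmn : p + r = n)
    (hnegdef : ∀ x : Fin n → ℝ, x ≠ 0 → x ⬝ᵥ (Ga zb).mulVec x < 0)
    (hmin : IsLocalMinOn Dual
      {ζ : (Fin p ⊕ Fin r) → ℝ | (∀ i, 0 < ζ (Sum.inl i)) ∧ (∑ i, ζ (Sum.inl i)) < 1 ∧
        (Ga ζ).det ≠ 0 ∧ ∀ x : Fin n → ℝ, x ≠ 0 → x ⬝ᵥ (Ga ζ).mulVec x < 0} zb) :
    IsLocalMin Prim xb ∧ Prim xb = Dual zb := by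
  -- abbreviations
  set S : Set ((Fin p ⊕ Fin r) → ℝ) :=
    {ζ : (Fin p ⊕ Fin r) → ℝ | (∀ i, 0 < ζ (Sum.inl i)) ∧ (∑ i, ζ (Sum.inl i)) < 1 ∧
      (Ga ζ).det ≠ 0 ∧ ∀ x : Fin n → ℝ, x ≠ 0 → x ⬝ᵥ (Ga ζ).mulVec x < 0} with hSdef
  -- (1) expansion of (Ga ζ).mulVec
  have hGsum : ∀ (ζ : (Fin p ⊕ Fin r) → ℝ) (x : Fin n → ℝ),
      (Ga ζ).mulVec x = A.mulVec x + ∑ i, ζ (Sum.inl i) • (Q i).mulVec x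
        + ∑ i, ζ (Sum.inr i) • (B i).mulVec x := by
    intro ζ x
    rw [hGa]
    simp only [Matrix.add_mulVec, sum_mulVec'_s4, Matrix.smul_mulVec]
  -- (2) quadratic form expansion
  have hquad : ∀ (ζ : (Fin p ⊕ Fin r) → ℝ) (x : Fin n → ℝ),
      x ⬝ᵥ (Ga ζ).mulVec x = x ⬝ᵥ A.mulVec x
        + (∑ i, ζ (Sum.inl i) * (x ⬝ᵥ (Q i).mulVec x))
        + (∑ i, ζ (Sum.inr i) * (x ⬝ᵥ (B i).mulVec x)) := by
    intro ζ x
    rw [hGsum ζ x, dotProduct_add, dotProduct_add]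
    congr 1
    · congr 1
      · rw [dotProduct_sum' Finset.univ]
        exact Finset.sum_congr rfl fun i _ => by
          rw [dotProduct_smul, smul_eq_mul]
    · rw [dotProduct_sum' Finset.univ]
      exact Finset.sum_congr rfl fun i _ => by
        rw [dotProduct_smul, smul_eq_mul]
  -- (3)
  have hGx : ∀ ζ : (Fin p ⊕ Fin r) → ℝ, (Ga ζ).det ≠ 0 →
      (Ga ζ).mulVec ((Ga ζ)⁻¹.mulVec f) = f := by
    intro ζ h3
    rw [Matrix.mulVec_mulVec, Matrix.mul_nonsing_inv _ (isUnit_iff_ne_zero.2 h3),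
      Matrix.one_mulVec]
  -- (4) the key inequality
  have hkey : ∀ ζ : (Fin p ⊕ Fin r) → ℝ, (∀ i, 0 < ζ (Sum.inl i)) →
      (∑ i, ζ (Sum.inl i)) < 1 → (Ga ζ).det ≠ 0 →
      Dual ζ ≤ Prim ((Ga ζ)⁻¹.mulVec f) := by
    intro ζ h1 h2 h3
    set x : Fin n → ℝ := (Ga ζ)⁻¹.mulVec f with hxdef
    have hfeq : (Ga ζ).mulVec x = f := hGx ζ h3
    have hq := hquad ζ x
    rw [hfeq] at hq
    have hfx : x ⬝ᵥ f = f ⬝ᵥ x := dotProduct_comm _ _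
    have hgibbs := gibbs (fun i => ζ (Sum.inl i))
      (fun i => β * ((1/2) * (x ⬝ᵥ (Q i).mulVec x) + d i)) h1 h2
    have hyβ : ∑ i, ζ (Sum.inl i) * (β * ((1/2) * (x ⬝ᵥ (Q i).mulVec x) + d i))
        = β * ∑ i, ζ (Sum.inl i) * ((1/2) * (x ⬝ᵥ (Q i).mulVec x) + d i) := by
      rw [Finset.mul_sum]; exact Finset.sum_congr rfl fun i _ => by ring
    rw [hyβ] at hgibbs
    have hg2 := mul_le_mul_of_nonneg_left hgibbs (le_of_lt (by positivity : (0:ℝ) < 1/β))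
    rw [← mul_assoc, one_div_mul_cancel hβ.ne', one_mul, mul_add] at hg2
    have hsplit1 : ∑ i, ζ (Sum.inl i) * ((1/2) * (x ⬝ᵥ (Q i).mulVec x) + d i)
        = (1/2) * ∑ i, ζ (Sum.inl i) * (x ⬝ᵥ (Q i).mulVec x) + ∑ i, d i * ζ (Sum.inl i) := by
      rw [Finset.mul_sum, ← Finset.sum_add_distrib]
      exact Finset.sum_congr rfl fun i _ => by ring
    rw [hsplit1] at hg2
    have hsq : ∀ i : Fin r, ζ (Sum.inr i) * ((1/2) * (x ⬝ᵥ (B i).mulVec x) + c i)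
        - ζ (Sum.inr i)^2 / (2 * α i) ≤ (α i / 2) * ((1/2) * (x ⬝ᵥ (B i).mulVec x) + c i)^2 := by
      intro i
      have hαi := hα i
      have hexp : (α i / 2) * ((1/2) * (x ⬝ᵥ (B i).mulVec x) + c i)^2
          - ζ (Sum.inr i) * ((1/2) * (x ⬝ᵥ (B i).mulVec x) + c i) + ζ (Sum.inr i)^2/(2*α i)
          = (α i * ((1/2) * (x ⬝ᵥ (B i).mulVec x) + c i) - ζ (Sum.inr i))^2 / (2 * α i) := by
        field_simp; ring
      have hnn : (0:ℝ) ≤ (α i * ((1/2) * (x ⬝ᵥ (B i).mulVec x) + c i) - ζ (Sum.inr i))^2 / (2 * α i) :=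
        div_nonneg (sq_nonneg _) (by linarith)
      linarith [hexp ▸ hnn]
    have hsqsum := Finset.sum_le_sum (fun i (_ : i ∈ Finset.univ) => hsq i)
    have hsplit2 : ∑ i, (ζ (Sum.inr i) * ((1/2) * (x ⬝ᵥ (B i).mulVec x) + c i)
          - ζ (Sum.inr i)^2/(2*α i))
        = ((1/2) * ∑ i, ζ (Sum.inr i) * (x ⬝ᵥ (B i).mulVec x) + ∑ i, c i * ζ (Sum.inr i))
          - ∑ i, ζ (Sum.inr i)^2/(2*α i) := by
      rw [Finset.sum_sub_distrib]
      congr 1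
      rw [Finset.mul_sum, ← Finset.sum_add_distrib]
      exact Finset.sum_congr rfl fun i _ => by ring
    rw [hsplit2] at hsqsum
    rw [hPrim, hDual]
    simp only [← hxdef]
    linarith [hg2, hsqsum, hq, hfx]
  -- (5) equality at the critical point
  have heq : Prim xb = Dual zb := by
    have hGsymm : (Ga zb)ᵀ = Ga zb := by
      rw [hGa]
      simp only [Matrix.transpose_add, Matrix.transpose_sum, Matrix.transpose_smul, hA.eq]
      congr 1
      · congr 1
        exact Finset.sum_congr rfl fun i _ => by rw [(hQ i).eq]
      · exact Finset.sum_congr rfl fun i _ => by rw [(hB i).eq]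
    have hGisymm : ((Ga zb)⁻¹)ᵀ = (Ga zb)⁻¹ := by
      rw [Matrix.transpose_nonsing_inv, hGsymm]
    have htrans : ∀ M : Matrix (Fin n) (Fin n) ℝ,
        f ⬝ᵥ ((Ga zb)⁻¹ * M * (Ga zb)⁻¹).mulVec f = xb ⬝ᵥ M.mulVec xb := by
      intro M
      rw [← Matrix.mulVec_mulVec, ← Matrix.mulVec_mulVec, ← hxb,
        Matrix.dotProduct_mulVec]
      congr 1
      rw [← hGisymm, Matrix.vecMul_transpose, ← hxb]
    have hxi : ∀ i, (1/2) * (xb ⬝ᵥ (Q i).mulVec xb) + d i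
        = (1/β) * Real.log (zb (Sum.inl i) / (1 - ∑ j, zb (Sum.inl j))) := by
      intro i; rw [← htrans (Q i)]; exact hcrit1 i
    have heta : ∀ i, (1/2) * (xb ⬝ᵥ (B i).mulVec xb) + c i = zb (Sum.inr i) / α i := by
      intro i; rw [← htrans (B i)]; exact hcrit2 i
    have h1s : 0 < 1 - ∑ i, zb (Sum.inl i) := by linarith
    have hexp : ∀ i, Real.exp (β * ((1/2) * (xb ⬝ᵥ (Q i).mulVec xb) + d i))
        = zb (Sum.inl i) / (1 - ∑ j, zb (Sum.inl j)) := by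
      intro i
      have hc : β * ((1/β) * Real.log (zb (Sum.inl i) / (1 - ∑ j, zb (Sum.inl j))))
          = Real.log (zb (Sum.inl i) / (1 - ∑ j, zb (Sum.inl j))) := by
        field_simp
      rw [hxi i, hc, Real.exp_log (div_pos (hpos i) h1s)]
    have hse : (∑ i, Real.exp (β * ((1/2) * (xb ⬝ᵥ (Q i).mulVec xb) + d i)))
        = (∑ i, zb (Sum.inl i)) / (1 - ∑ j, zb (Sum.inl j)) := by
      rw [Finset.sum_congr rfl fun i _ => hexp i, ← Finset.sum_div]
    have hlogs : Real.log (1 + (∑ i, zb (Sum.inl i)) / (1 - ∑ j, zb (Sum.inl j)))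
        = - Real.log (1 - ∑ i, zb (Sum.inl i)) := by
      have hx1 : 1 + (∑ i, zb (Sum.inl i)) / (1 - ∑ j, zb (Sum.inl j))
          = (1 - ∑ i, zb (Sum.inl i))⁻¹ := by
        field_simp; ring
      rw [hx1, Real.log_inv]
    have hfeq2 : (Ga zb).mulVec xb = f := by rw [hxb]; exact hGx zb hdet
    have hq := hquad zb xb
    rw [hfeq2] at hq
    have hcomm : xb ⬝ᵥ f = f ⬝ᵥ xb := dotProduct_comm _ _
    have hq2 : ∀ i, xb ⬝ᵥ (Q i).mulVec xb
        = 2*((1/β) * (Real.log (zb (Sum.inl i)) - Real.log (1 - ∑ j, zb (Sum.inl j))) - d i) := by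
      intro i
      have h := hxi i
      rw [Real.log_div (hpos i).ne' h1s.ne'] at h
      linarith
    have hb2 : ∀ i, xb ⬝ᵥ (B i).mulVec xb = 2*(zb (Sum.inr i)/α i - c i) := by
      intro i; have := heta i; linarith
    have hSQ : ∑ i, zb (Sum.inl i) * (xb ⬝ᵥ (Q i).mulVec xb)
        = (2/β) * (∑ i, zb (Sum.inl i) * Real.log (zb (Sum.inl i)))
          - (2/β) * (∑ i, zb (Sum.inl i)) * Real.log (1 - ∑ j, zb (Sum.inl j))
          - 2 * ∑ i, d i * zb (Sum.inl i) := by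
      calc ∑ i, zb (Sum.inl i) * (xb ⬝ᵥ (Q i).mulVec xb)
          = ∑ i, ((2/β) * (zb (Sum.inl i) * Real.log (zb (Sum.inl i)))
              - ((2/β) * Real.log (1 - ∑ j, zb (Sum.inl j))) * zb (Sum.inl i)
              - 2 * (d i * zb (Sum.inl i))) := by
            refine Finset.sum_congr rfl fun i _ => ?_
            rw [hq2 i]; field_simp
        _ = (2/β) * (∑ i, zb (Sum.inl i) * Real.log (zb (Sum.inl i)))
            - (2/β) * (∑ i, zb (Sum.inl i)) * Real.log (1 - ∑ j, zb (Sum.inl j))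
            - 2 * ∑ i, d i * zb (Sum.inl i) := by
            rw [Finset.sum_sub_distrib, Finset.sum_sub_distrib, ← Finset.mul_sum,
              ← Finset.mul_sum, ← Finset.mul_sum]
            ring
    have hSB : ∑ i, zb (Sum.inr i) * (xb ⬝ᵥ (B i).mulVec xb)
        = 4 * ∑ i, zb (Sum.inr i)^2/(2 * α i) - 2 * ∑ i, c i * zb (Sum.inr i) := by
      calc ∑ i, zb (Sum.inr i) * (xb ⬝ᵥ (B i).mulVec xb)
          = ∑ i, (4 * (zb (Sum.inr i)^2/(2*α i)) - 2*(c i * zb (Sum.inr i))) := by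
            refine Finset.sum_congr rfl fun i _ => ?_
            rw [hb2 i]
            have := (hα i).ne'
            field_simp; ring
        _ = 4 * ∑ i, zb (Sum.inr i)^2/(2 * α i) - 2 * ∑ i, c i * zb (Sum.inr i) := by
            rw [Finset.sum_sub_distrib, ← Finset.mul_sum, ← Finset.mul_sum]
    have hSqS : ∑ i, (α i / 2) * ((1/2) * (xb ⬝ᵥ (B i).mulVec xb) + c i)^2
        = ∑ i, zb (Sum.inr i)^2/(2*α i) := by
      refine Finset.sum_congr rfl fun i _ => ?_
      rw [heta i]
      have := (hα i).ne'
      field_simp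
    have hxAx : xb ⬝ᵥ A.mulVec xb
        = f ⬝ᵥ xb - ((2/β) * (∑ i, zb (Sum.inl i) * Real.log (zb (Sum.inl i)))
          - (2/β) * (∑ i, zb (Sum.inl i)) * Real.log (1 - ∑ j, zb (Sum.inl j))
          - 2 * ∑ i, d i * zb (Sum.inl i))
          - (4 * ∑ i, zb (Sum.inr i)^2/(2 * α i) - 2 * ∑ i, c i * zb (Sum.inr i)) := by
      linear_combination hcomm - hq - hSQ - hSB
    rw [hPrim, hDual]
    simp only [← hxb]
    rw [hse, hlogs, hSqS, hxAx]
    ring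
  
  -- (6) S is a neighborhood of zb
  have hGacont : Continuous Ga := by
    rw [hGa]
    exact (continuous_const.add (continuous_finset_sum _ fun i _ =>
      ((continuous_apply (Sum.inl i)).smul continuous_const))).add
      (continuous_finset_sum _ fun i _ => ((continuous_apply (Sum.inr i)).smul continuous_const))
  have hSnhds : S ∈ nhds zb := by
    have c1 : ∀ᶠ ζ : (Fin p ⊕ Fin r) → ℝ in nhds zb, ∀ i, 0 < ζ (Sum.inl i) := by
      rw [eventually_all]
      intro i
      exact (continuous_apply (Sum.inl i)).continuousAt.eventually
        (eventually_gt_nhds (hpos i))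
    have c2 : ∀ᶠ ζ : (Fin p ⊕ Fin r) → ℝ in nhds zb, (∑ i, ζ (Sum.inl i)) < 1 :=
      (continuous_finset_sum Finset.univ fun i _ =>
        continuous_apply (Sum.inl i)).continuousAt.eventually (eventually_lt_nhds hsum)
    have c3 : ∀ᶠ ζ : (Fin p ⊕ Fin r) → ℝ in nhds zb, (Ga ζ).det ≠ 0 :=
      (hGacont.matrix_det.continuousAt).eventually (eventually_ne_nhds hdet)
    have c4 : ∀ᶠ ζ : (Fin p ⊕ Fin r) → ℝ in nhds zb,
        ∀ x : Fin n → ℝ, x ≠ 0 → x ⬝ᵥ (Ga ζ).mulVec x < 0 :=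
      hGacont.continuousAt.eventually (negdef_eventually hn (Ga zb) hnegdef)
    filter_upwards [c1, c2, c3, c4] with ζ h1 h2 h3 h4
    exact ⟨h1, h2, h3, h4⟩
  have hmin' : ∀ᶠ ζ in nhds zb, Dual zb ≤ Dual ζ := by
    have h1 : nhds zb = nhdsWithin zb S := (nhdsWithin_eq_nhds.2 hSnhds).symm
    rw [h1]; exact hmin
  -- the equivalence of index types
  have e : (Fin p ⊕ Fin r) ≃ Fin n := finSumFinEquiv.trans (finCongr hmn)
  set Nmat : (Fin n → ℝ) → Matrix (Fin n) (Fin n) ℝ :=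
    fun x => Matrix.of fun i k => (Sum.elim Q B (e.symm k)).mulVec x i with hNmat
  have hNapp : ∀ (x : Fin n → ℝ) (w : Fin n → ℝ),
      (Nmat x).mulVec w = ∑ j : Fin p ⊕ Fin r, w (e j) • (Sum.elim Q B j).mulVec x := by
    intro x w
    funext i
    simp only [Matrix.mulVec, dotProduct, Matrix.of_apply, Finset.sum_apply,
      Pi.smul_apply, smul_eq_mul, hNmat]
    exact Fintype.sum_equiv e.symm _ _ fun k => by
      rw [Equiv.apply_symm_apply]; ring
  have hGaN : ∀ (ζ : (Fin p ⊕ Fin r) → ℝ) (x : Fin n → ℝ),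
      (Ga ζ).mulVec x = A.mulVec x + (Nmat x).mulVec (fun k => ζ (e.symm k)) := by
    intro ζ x
    rw [hGsum, hNapp]
    have hsum2 : ∑ j : Fin p ⊕ Fin r, (fun k => ζ (e.symm k)) (e j) • (Sum.elim Q B j).mulVec x
        = ∑ i, ζ (Sum.inl i) • (Q i).mulVec x + ∑ i, ζ (Sum.inr i) • (B i).mulVec x := by
      simp only [Equiv.symm_apply_apply]
      rw [Fintype.sum_sum_type]
      simp only [Sum.elim_inl, Sum.elim_inr]
    rw [hsum2, add_assoc]
  -- (7) invertibility of Nmat xb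
  have hfeq2 : (Ga zb).mulVec xb = f := by rw [hxb]; exact hGx zb hdet
  have hSev : ∀ᶠ ζ in nhds zb, ζ ∈ S := by
    filter_upwards [hSnhds] with ζ h
    exact h
  have hNdet : (Nmat xb).det ≠ 0 := by
    intro hdet0
    obtain ⟨w, hwne, hw⟩ := (Matrix.exists_mulVec_eq_zero_iff).2 hdet0
    set v : (Fin p ⊕ Fin r) → ℝ := fun j => w (e j) with hv
    have hvne : v ≠ 0 := by
      intro h0
      apply hwne
      funext k
      have h1 : v (e.symm k) = 0 := by rw [h0]; rfl
      rw [hv] at h1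
      simpa [Equiv.apply_symm_apply] using h1
    have hMv : ∑ j : Fin p ⊕ Fin r, v j • (Sum.elim Q B j).mulVec xb = 0 := by
      have h1 := hNapp xb w
      rw [hw] at h1
      exact h1.symm
    have hGt : ∀ t : ℝ, (Ga (zb + t • v)).mulVec xb = f := by
      intro t
      have h1 : ∑ i : Fin p, (zb + t • v) (Sum.inl i) • (Q i).mulVec xb
          = ∑ i : Fin p, zb (Sum.inl i) • (Q i).mulVec xb
            + t • ∑ i : Fin p, v (Sum.inl i) • (Q i).mulVec xb := by
        rw [Finset.smul_sum, ← Finset.sum_add_distrib]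
        refine Finset.sum_congr rfl fun i _ => ?_
        have h2 : (zb + t • v) (Sum.inl i) = zb (Sum.inl i) + t * v (Sum.inl i) := rfl
        rw [h2, add_smul, smul_smul]
      have h2 : ∑ i : Fin r, (zb + t • v) (Sum.inr i) • (B i).mulVec xb
          = ∑ i : Fin r, zb (Sum.inr i) • (B i).mulVec xb
            + t • ∑ i : Fin r, v (Sum.inr i) • (B i).mulVec xb := by
        rw [Finset.smul_sum, ← Finset.sum_add_distrib]
        refine Finset.sum_congr rfl fun i _ => ?_
        have h3 : (zb + t • v) (Sum.inr i) = zb (Sum.inr i) + t * v (Sum.inr i) := rfl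
        rw [h3, add_smul, smul_smul]
      have h4 : ∑ j : Fin p ⊕ Fin r, v j • (Sum.elim Q B j).mulVec xb
          = ∑ i : Fin p, v (Sum.inl i) • (Q i).mulVec xb
            + ∑ i : Fin r, v (Sum.inr i) • (B i).mulVec xb := by
        rw [Fintype.sum_sum_type]
        simp only [Sum.elim_inl, Sum.elim_inr]
      have h5 := hGsum (zb + t • v) xb
      rw [h1, h2] at h5
      have h6 := hGsum zb xb
      rw [h5, ← hfeq2, h6]
      rw [h4] at hMv
      have h7 : t • (∑ i : Fin p, v (Sum.inl i) • (Q i).mulVec xb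
          + ∑ i : Fin r, v (Sum.inr i) • (B i).mulVec xb) = 0 := by
        rw [hMv, smul_zero]
      rw [smul_add] at h7
      have h8 := congrFun h7
      funext i
      simp only [Pi.add_apply, Pi.smul_apply, Pi.zero_apply, smul_eq_mul] at h8 ⊢
      have := h8 i
      linarith [this]
    have hlin : Filter.Tendsto (fun t : ℝ => zb + t • v) (nhds 0) (nhds zb) := by
      have hc : Continuous (fun t : ℝ => zb + t • v) :=
        continuous_const.add (continuous_id.smul continuous_const)
      simpa using hc.tendsto (0:ℝ)
    have hev : ∀ᶠ t : ℝ in nhds 0, (zb + t • v) ∈ S ∧ Dual zb ≤ Dual (zb + t • v) :=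
      hlin.eventually (hSev.and hmin')
    obtain ⟨δ, hδpos, hδ⟩ := Metric.eventually_nhds_iff.1 hev
    set t0 : ℝ := δ/2 with ht0
    have ht0pos : 0 < t0 := by rw [ht0]; linarith
    have hdist : ∀ t : ℝ, |t| < δ → dist t (0:ℝ) < δ := by
      intro t ht; rwa [Real.dist_eq, sub_zero]
    have hmemP := hδ (hdist t0 (by rw [abs_of_pos ht0pos]; rw [ht0]; linarith))
    have hmemM := hδ (hdist (-t0) (by rw [abs_neg, abs_of_pos ht0pos]; rw [ht0]; linarith))
    obtain ⟨⟨hp1, hp2, hp3, _⟩, hDP⟩ := hmemP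
    obtain ⟨⟨hm1, hm2, hm3, _⟩, hDM⟩ := hmemM
    have hxinv : ∀ t : ℝ, (Ga (zb + t • v)).det ≠ 0 → (Ga (zb + t • v))⁻¹.mulVec f = xb := by
      intro t hdt
      rw [← hGt t, Matrix.mulVec_mulVec, Matrix.nonsing_inv_mul _ (isUnit_iff_ne_zero.2 hdt),
        Matrix.one_mulVec]
    -- expand Dual along the line
    have hDualW : ∀ ζ : (Fin p ⊕ Fin r) → ℝ, (Ga ζ)⁻¹.mulVec f = xb →
        Dual ζ = -(1/2) * (f ⬝ᵥ xb)
          - (((1/β) * ((∑ i, ζ (Sum.inl i) * Real.log (ζ (Sum.inl i)))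
              + (1 - ∑ i, ζ (Sum.inl i)) * Real.log (1 - ∑ i, ζ (Sum.inl i)))
            - ∑ i, d i * ζ (Sum.inl i))
          + (∑ i, (ζ (Sum.inr i))^2/(2*α i) - ∑ i, c i * ζ (Sum.inr i))) := by
      intro ζ hinv
      rw [hDual]
      simp only
      rw [hinv]
      ring
    have hDzb := hDualW zb hxb.symm
    have hDp := hDualW (zb + t0 • v) (hxinv t0 hp3)
    have hDm := hDualW (zb + (-t0) • v) (hxinv (-t0) hm3)
    -- apply the strict midpoint inequality
    have happly : (∀ i : Fin p, (zb + t0 • v) (Sum.inl i) = zb (Sum.inl i) + t0 * v (Sum.inl i))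
        ∧ (∀ i : Fin p, (zb + (-t0) • v) (Sum.inl i) = zb (Sum.inl i) - t0 * v (Sum.inl i))
        ∧ (∀ i : Fin r, (zb + t0 • v) (Sum.inr i) = zb (Sum.inr i) + t0 * v (Sum.inr i))
        ∧ (∀ i : Fin r, (zb + (-t0) • v) (Sum.inr i) = zb (Sum.inr i) - t0 * v (Sum.inr i)) := by
      refine ⟨fun i => rfl, fun i => by
        show zb (Sum.inl i) + (-t0) * v (Sum.inl i) = _; ring, fun i => rfl, fun i => by
        show zb (Sum.inr i) + (-t0) * v (Sum.inr i) = _; ring⟩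
    obtain ⟨ha1, ha2, ha3, ha4⟩ := happly
    have hvsplit : (∃ i, t0 * v (Sum.inl i) ≠ 0) ∨ (∃ i, t0 * v (Sum.inr i) ≠ 0) := by
      by_contra hcon
      push_neg at hcon
      obtain ⟨hc1, hc2⟩ := hcon
      apply hvne
      funext j
      cases j with
      | inl i =>
        have := hc1 i
        have h9 : v (Sum.inl i) = 0 := by
          rcases mul_eq_zero.1 this with h | h
          · exact absurd h ht0pos.ne'
          · exact h
        exact h9
      | inr i =>
        have := hc2 i
        rcases mul_eq_zero.1 this with h | h
        · exact absurd h ht0pos.ne'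
        · exact h
    have hposP : ∀ i : Fin p, 0 < zb (Sum.inl i) + t0 * v (Sum.inl i) := by
      intro i; have := hp1 i; rwa [ha1 i] at this
    have hposM : ∀ i : Fin p, 0 < zb (Sum.inl i) - t0 * v (Sum.inl i) := by
      intro i; have := hm1 i; rwa [ha2 i] at this
    have hsumP : ∑ i, (zb (Sum.inl i) + t0 * v (Sum.inl i)) < 1 := by
      have := hp2; rwa [Finset.sum_congr rfl fun i _ => ha1 i] at this
    have hsumM : ∑ i, (zb (Sum.inl i) - t0 * v (Sum.inl i)) < 1 := by
      have := hm2; rwa [Finset.sum_congr rfl fun i _ => ha2 i] at this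
    have hstrict := strict_mid hβ hα d c (fun i => zb (Sum.inl i)) (fun i => t0 * v (Sum.inl i))
      (fun i => zb (Sum.inr i)) (fun i => t0 * v (Sum.inr i)) hvsplit hposP hposM hsumP hsumM
    -- rewrite the Dual expansions into the same shape
    rw [hDzb] at hDP hDM
    rw [hDp] at hDP
    rw [hDm] at hDM
    -- convert hDP/hDM into inequalities on W values
    have hWP : ((1/β) * ((∑ i, (zb (Sum.inl i) + t0 * v (Sum.inl i)) * Real.log (zb (Sum.inl i) + t0 * v (Sum.inl i)))
          + (1 - ∑ i, (zb (Sum.inl i) + t0 * v (Sum.inl i))) * Real.log (1 - ∑ i, (zb (Sum.inl i) + t0 * v (Sum.inl i))))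
        - ∑ i, d i * (zb (Sum.inl i) + t0 * v (Sum.inl i)))
        + (∑ i, (zb (Sum.inr i) + t0 * v (Sum.inr i))^2/(2*α i) - ∑ i, c i * (zb (Sum.inr i) + t0 * v (Sum.inr i)))
        ≤ ((1/β) * ((∑ i, zb (Sum.inl i) * Real.log (zb (Sum.inl i)))
          + (1 - ∑ i, zb (Sum.inl i)) * Real.log (1 - ∑ i, zb (Sum.inl i)))
        - ∑ i, d i * zb (Sum.inl i))
        + (∑ i, (zb (Sum.inr i))^2/(2*α i) - ∑ i, c i * zb (Sum.inr i)) := by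
      have e1 : ∀ i : Fin p, (zb + t0 • v) (Sum.inl i) = zb (Sum.inl i) + t0 * v (Sum.inl i) := ha1
      have e2 : ∀ i : Fin r, (zb + t0 • v) (Sum.inr i) = zb (Sum.inr i) + t0 * v (Sum.inr i) := ha3
      simp only [Finset.sum_congr rfl fun i _ => congrArg₂ HMul.hMul (e1 i) (congrArg Real.log (e1 i))] at hDP
      simp only [Finset.sum_congr rfl fun i _ => e1 i] at hDP
      simp only [Finset.sum_congr rfl fun i _ => congrArg (d i * ·) (e1 i)] at hDP
      simp only [Finset.sum_congr rfl fun i _ => congrArg (·^2/(2*α i)) (e2 i)] at hDP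
      simp only [Finset.sum_congr rfl fun i _ => congrArg (c i * ·) (e2 i)] at hDP
      linarith [hDP]
    have hWM : ((1/β) * ((∑ i, (zb (Sum.inl i) - t0 * v (Sum.inl i)) * Real.log (zb (Sum.inl i) - t0 * v (Sum.inl i)))
          + (1 - ∑ i, (zb (Sum.inl i) - t0 * v (Sum.inl i))) * Real.log (1 - ∑ i, (zb (Sum.inl i) - t0 * v (Sum.inl i))))
        - ∑ i, d i * (zb (Sum.inl i) - t0 * v (Sum.inl i)))
        + (∑ i, (zb (Sum.inr i) - t0 * v (Sum.inr i))^2/(2*α i) - ∑ i, c i * (zb (Sum.inr i) - t0 * v (Sum.inr i)))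
        ≤ ((1/β) * ((∑ i, zb (Sum.inl i) * Real.log (zb (Sum.inl i)))
          + (1 - ∑ i, zb (Sum.inl i)) * Real.log (1 - ∑ i, zb (Sum.inl i)))
        - ∑ i, d i * zb (Sum.inl i))
        + (∑ i, (zb (Sum.inr i))^2/(2*α i) - ∑ i, c i * zb (Sum.inr i)) := by
      have e1 : ∀ i : Fin p, (zb + (-t0) • v) (Sum.inl i) = zb (Sum.inl i) - t0 * v (Sum.inl i) := ha2
      have e2 : ∀ i : Fin r, (zb + (-t0) • v) (Sum.inr i) = zb (Sum.inr i) - t0 * v (Sum.inr i) := ha4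
      simp only [Finset.sum_congr rfl fun i _ => congrArg₂ HMul.hMul (e1 i) (congrArg Real.log (e1 i))] at hDM
      simp only [Finset.sum_congr rfl fun i _ => e1 i] at hDM
      simp only [Finset.sum_congr rfl fun i _ => congrArg (d i * ·) (e1 i)] at hDM
      simp only [Finset.sum_congr rfl fun i _ => congrArg (·^2/(2*α i)) (e2 i)] at hDM
      simp only [Finset.sum_congr rfl fun i _ => congrArg (c i * ·) (e2 i)] at hDM
      linarith [hDM]
    linarith [hstrict, hWP, hWM]
  
  -- (8) final assembly
  have hNcont : Continuous Nmat := by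
    refine continuous_matrix fun i k => ?_
    simp only [hNmat, Matrix.of_apply, Matrix.mulVec, dotProduct]
    exact continuous_finset_sum _ fun j _ => (continuous_const.mul (continuous_apply j))
  have hNinvcont : ContinuousAt (fun x => (Nmat x)⁻¹) xb := by
    have h1 : ContinuousAt Inv.inv (Nmat xb) := by
      apply continuousAt_matrix_inv
      rw [Ring.inverse_eq_inv']
      exact continuousAt_inv₀ hNdet
    exact h1.comp hNcont.continuousAt
  set ζmap : (Fin n → ℝ) → ((Fin p ⊕ Fin r) → ℝ) :=
    fun x => fun j => ((Nmat x)⁻¹.mulVec (f - A.mulVec x)) (e j) with hζmap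
  have hAcont : Continuous (fun x : Fin n → ℝ => f - A.mulVec x) :=
    continuous_const.sub (continuous_const.matrix_mulVec continuous_id)
  have hPhicont : ContinuousAt (fun x => (Nmat x)⁻¹.mulVec (f - A.mulVec x)) xb := by
    have hpair : ContinuousAt (fun x => ((Nmat x)⁻¹, f - A.mulVec x)) xb :=
      hNinvcont.prodMk hAcont.continuousAt
    have hmv : Continuous (fun q : Matrix (Fin n) (Fin n) ℝ × (Fin n → ℝ) => q.1.mulVec q.2) :=
      continuous_fst.matrix_mulVec continuous_snd
    exact (hmv.continuousAt).comp hpair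
  have hζcont : ContinuousAt ζmap xb := by
    rw [hζmap]
    exact continuousAt_pi.2 fun j => ((continuous_apply (e j)).continuousAt).comp hPhicont
  have hζ0 : ζmap xb = zb := by
    have hw0 : (Nmat xb).mulVec (fun k => zb (e.symm k)) = f - A.mulVec xb := by
      have h1 := hGaN zb xb
      rw [hfeq2] at h1
      funext i
      have h2 := congrFun h1 i
      simp only [Pi.add_apply, Pi.sub_apply] at h2 ⊢
      linarith
    have h2 : (Nmat xb)⁻¹.mulVec (f - A.mulVec xb) = (fun k => zb (e.symm k)) := by
      rw [← hw0, Matrix.mulVec_mulVec,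
        Matrix.nonsing_inv_mul _ (isUnit_iff_ne_zero.2 hNdet), Matrix.one_mulVec]
    rw [hζmap]
    funext j
    simp only
    rw [h2]
    simp [Equiv.symm_apply_apply]
  have hζt : Filter.Tendsto ζmap (nhds xb) (nhds zb) := by
    have h := hζcont
    rwa [ContinuousAt, hζ0] at h
  have E0 : ∀ᶠ x in nhds xb, (Nmat x).det ≠ 0 :=
    (hNcont.matrix_det).continuousAt.eventually (eventually_ne_nhds hNdet)
  have E1 : ∀ᶠ x in nhds xb, ζmap x ∈ S := hζt.eventually hSev
  have E2 : ∀ᶠ x in nhds xb, Dual zb ≤ Dual (ζmap x) := hζt.eventually hmin'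
  constructor
  · filter_upwards [E0, E1, E2] with x h0 h1 h2
    obtain ⟨hb1, hb2, hb3, _⟩ := h1
    have hgx : (Ga (ζmap x)).mulVec x = f := by
      have h3 := hGaN (ζmap x) x
      have h4 : (fun k => ζmap x (e.symm k)) = (Nmat x)⁻¹.mulVec (f - A.mulVec x) := by
        funext k
        simp only [hζmap]
        rw [Equiv.apply_symm_apply]
      rw [h4] at h3
      rw [h3, Matrix.mulVec_mulVec,
        Matrix.mul_nonsing_inv _ (isUnit_iff_ne_zero.2 h0), Matrix.one_mulVec]
      abel
    have hinvx : (Ga (ζmap x))⁻¹.mulVec f = x := by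
      rw [← hgx, Matrix.mulVec_mulVec,
        Matrix.nonsing_inv_mul _ (isUnit_iff_ne_zero.2 hb3), Matrix.one_mulVec]
    have hkx := hkey (ζmap x) hb1 hb2 hb3
    rw [hinvx] at hkx
    calc Prim xb = Dual zb := heq
      _ ≤ Dual (ζmap x) := h2
      _ ≤ Prim x := hkx
  · exact heq
end
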